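/- Let G be a graph and v ∈ V(G) a free vertex of G. If J_G is strongly unmixed and there exists no cutset T ∈ 𝔠(G) with N_G(v) ⊆ T, then J_{G∖{v}} is strongly unmixed. -/

import Mathlib

set_option linter.unusedSectionVars false
set_option maxHeartbeats 1000000


open SimpleGraph
open Function

universe u u'

/-- The number of connected components of the induced subgraph of `G` on the vertex set `A`. -/
noncomputable def cComp {V : Type u} (G : SimpleGraph V) (A : Set V) : ℕ :=
  Nat.card (G.induce A).ConnectedComponent

/-- `x` is a cut vertex of the induced subgraph of `G` on `A`: removing `x`
increases the number of connected components. -/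
def CutVertexOn {V : Type u} (G : SimpleGraph V) (A : Set V) (x : V) : Prop :=
  x ∈ A ∧ cComp G A < cComp G (A \ {x})

/-- `T` is a cutset of the induced subgraph of `G` on `A`: every `t ∈ T` is a
cut vertex of `G[A] ∖ (T ∖ {t})`. -/
def CutsetOn {V : Type u} [DecidableEq V] (G : SimpleGraph V) (A : Set V) (T : Finset V) :
    Prop :=
  ↑T ⊆ A ∧ ∀ t ∈ T, CutVertexOn G (A \ ↑(T.erase t)) t

/-- The binomial edge ideal of the induced subgraph of `G` on `A` is unmixed
(combinatorial characterization): `c(T) = |T| + c(∅)` for every cutset `T`. -/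
def UnmixedOn {V : Type u} [DecidableEq V] (G : SimpleGraph V) (A : Set V) : Prop :=
  ∀ T : Finset V, CutsetOn G A T → cComp G (A \ ↑T) = T.card + cComp G A

/-- The induced subgraph of `G` on `A` is accessible. -/
def AccessibleOn {V : Type u} [DecidableEq V] (G : SimpleGraph V) (A : Set V) : Prop :=
  UnmixedOn G A ∧
    ∀ T : Finset V, CutsetOn G A T → T.Nonempty → ∃ t ∈ T, CutsetOn G A (T.erase t)

/-- The graph `(G[A])_x`: add all edges between neighbours of `x` lying in `A`. -/
def cliqueAtOn {V : Type u} (G : SimpleGraph V) (A : Set V) (x : V) : SimpleGraph V :=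
  G ⊔ SimpleGraph.fromRel (fun a b => a ∈ A ∧ b ∈ A ∧ G.Adj x a ∧ G.Adj x b)

/-- The binomial edge ideal of the induced subgraph of `G` on `A` is strongly unmixed. -/
inductive StronglyUnmixedOn {V : Type u} [DecidableEq V] : SimpleGraph V → Set V → Prop
  | complete (G : SimpleGraph V) (A : Set V)
      (h : ∀ a b : A, (G.induce A).Reachable a b → a ≠ b → (G.induce A).Adj a b) :
      StronglyUnmixedOn G A
  | cut (G : SimpleGraph V) (A : Set V) (hU : UnmixedOn G A) (x : V)
      (hx : CutVertexOn G A x)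
      (h1 : StronglyUnmixedOn G (A \ {x}))
      (h2 : StronglyUnmixedOn (cliqueAtOn G A x) A)
      (h3 : StronglyUnmixedOn (cliqueAtOn G A x) (A \ {x})) :
      StronglyUnmixedOn G A

/-- `x` is a free vertex of `G`: the induced subgraph on `N(x) ∪ {x}` is complete. -/
def FreeVertex {V : Type u} (G : SimpleGraph V) (x : V) : Prop :=
  ∀ a b : V, G.Adj x a → G.Adj x b → a ≠ b → G.Adj a b

/-- Attach a whisker (pendant vertex) at each vertex of `Wv`.  `Sum.inl a` is the
original vertex `a` and `Sum.inr x` is the whisker vertex `f_x` attached at `x ∈ Wv`. -/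
def whiskered {V : Type u} (G : SimpleGraph V) (Wv : Set V) : SimpleGraph (V ⊕ V) :=
  SimpleGraph.fromRel (fun a b =>
    (∃ x y, G.Adj x y ∧ a = Sum.inl x ∧ b = Sum.inl y) ∨
    (∃ x ∈ Wv, a = Sum.inl x ∧ b = Sum.inr x))

/-- `B` is (the vertex set of) a block of `G`: a maximal connected induced
subgraph having no cut vertex. -/
def IsBlock {V : Type u} (G : SimpleGraph V) (B : Set V) : Prop :=
  (G.induce B).Connected ∧ (∀ x, ¬ CutVertexOn G B x) ∧
    ∀ B' : Set V, B ⊆ B' → (G.induce B').Connected → (∀ x, ¬ CutVertexOn G B' x) → B' = B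

/-- Glue two graphs `G` and `H`, identifying the vertex `x` of `G` with the vertex
`y` of `H` (the identified vertex is `Sum.inl x`). -/
def glueAt {V : Type u} {W : Type u'} (G : SimpleGraph V) (H : SimpleGraph W) (x : V) (y : W) :
    SimpleGraph (V ⊕ W) :=
  SimpleGraph.fromRel (fun a b =>
    (∃ p q, G.Adj p q ∧ a = Sum.inl p ∧ b = Sum.inl q) ∨
    (∃ p q, H.Adj p q ∧ p ≠ y ∧ q ≠ y ∧ a = Sum.inr p ∧ b = Sum.inr q) ∨
    (∃ q, H.Adj y q ∧ a = Sum.inl x ∧ b = Sum.inr q))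

/-- The star product `K_m ⋆_r K_n`: two complete graphs, on `{x₁,…,x_m}` (the `inl`s)
and `{y₁,…,y_n}` (the `inr`s), together with the matching edges `{x_i, y_i}` for `1 ≤ i ≤ r`
(indices `0,…,r-1` here). -/
def starProd (m n r : ℕ) : SimpleGraph (Fin m ⊕ Fin n) :=
  SimpleGraph.fromRel (fun a b =>
    (∃ x y : Fin m, a = Sum.inl x ∧ b = Sum.inl y) ∨
    (∃ x y : Fin n, a = Sum.inr x ∧ b = Sum.inr y) ∨
    (∃ (x : Fin m) (y : Fin n), (x : ℕ) = (y : ℕ) ∧ (x : ℕ) < r ∧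
      a = Sum.inl x ∧ b = Sum.inr y))

/-- The vertices `x_i, y_i` for `2 ≤ i ≤ r` (indices `1,…,r-1` here), at which
whiskers are attached to form `overline(K_m ⋆_r K_n)`. -/
def starWhisk (m n r : ℕ) : Set (Fin m ⊕ Fin n) :=
  {a | (∃ x : Fin m, a = Sum.inl x ∧ 1 ≤ (x : ℕ) ∧ (x : ℕ) < r) ∨
       (∃ y : Fin n, a = Sum.inr y ∧ 1 ≤ (y : ℕ) ∧ (y : ℕ) < r)}

/-- `a` and `b` both lie in `A` and are joined by a path of the induced subgraph of `G` on `A`. -/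
def ReachIn {V : Type u} (G : SimpleGraph V) (A : Set V) (a b : V) : Prop :=
  ∃ (ha : a ∈ A) (hb : b ∈ A), (G.induce A).Reachable ⟨a, ha⟩ ⟨b, hb⟩

/-- Auxiliary (connected case): `G[A]` has no cut vertex, or for every cut vertex `x`,
every connected component of `G[A] ∖ {x}` contains at most `r` cut vertices of `G[A] ∖ {x}`. -/
def RCutConnAux {V : Type u} (G : SimpleGraph V) (A : Set V) (r : ℕ) : Prop :=
  (∀ x, ¬ CutVertexOn G A x) ∨
    ∀ x, CutVertexOn G A x → ∀ a ∈ A \ {x},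
      Set.ncard {w | CutVertexOn G (A \ {x}) w ∧ ReachIn G (A \ {x}) a w} ≤ r

/-- `G[A]` is `r`-cut-connected: every connected component of `G[A]` satisfies the
condition of `RCutConnAux`. -/
def RCutConn {V : Type u} (G : SimpleGraph V) (A : Set V) (r : ℕ) : Prop :=
  ∀ a ∈ A, RCutConnAux G {b | ReachIn G A a b} r

/-- `G[A]` is strongly `r`-cut-connected: it is `r`-cut-connected and, recursively,
`G[A] ∖ {x}` is strongly `r`-cut-connected for every cut vertex `x`. -/
inductive StronglyRCutConn {V : Type u} (r : ℕ) : SimpleGraph V → Set V → Prop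
  | mk (G : SimpleGraph V) (A : Set V) (h1 : RCutConn G A r)
      (h2 : ∀ x, CutVertexOn G A x → StronglyRCutConn r G (A \ {x})) :
      StronglyRCutConn r G A

namespace Aux

variable {V : Type u} [Fintype V] [DecidableEq V]

/-- adjacency within a set -/
def RelOn (G : SimpleGraph V) (S : Set V) (a b : V) : Prop := a ∈ S ∧ b ∈ S ∧ G.Adj a b

/-- chains within a set -/
def Chain (G : SimpleGraph V) (S : Set V) (a b : V) : Prop :=
  Relation.ReflTransGen (RelOn G S) a b

theorem Chain.symm {G : SimpleGraph V} {S : Set V} {a b : V} (h : Chain G S a b) :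
    Chain G S b a := by
  induction h with
  | refl => exact Relation.ReflTransGen.refl
  | tail _ hlast ih => exact Relation.ReflTransGen.head ⟨hlast.2.1, hlast.1, hlast.2.2.symm⟩ ih

theorem chain_mono {G G' : SimpleGraph V} {S S' : Set V} (hG : G ≤ G') (hS : S ⊆ S')
    {a b : V} (h : Chain G S a b) : Chain G' S' a b :=
  (Relation.ReflTransGen.mono (fun _ _ hr => ⟨hS hr.1, hS hr.2.1, hG hr.2.2⟩) :
    Relation.ReflTransGen (RelOn G S) ≤ Relation.ReflTransGen (RelOn G' S')) a b h

theorem reachable_iff_chain {G : SimpleGraph V} {S : Set V} {a b : V} (ha : a ∈ S) (hb : b ∈ S) :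
    (G.induce S).Reachable ⟨a, ha⟩ ⟨b, hb⟩ ↔ Chain G S a b := by
  constructor
  · intro h
    obtain ⟨w⟩ := h
    have : ∀ (x y : ↥S), (G.induce S).Walk x y → Chain G S x.1 y.1 := by
      intro x y w
      induction w with
      | nil => exact Relation.ReflTransGen.refl
      | cons hadj _ ih => exact Relation.ReflTransGen.head ⟨_root_.Subtype.mem _, _root_.Subtype.mem _, hadj⟩ ih
    exact this _ _ w
  · intro h
    have : ∀ (c : V), Chain G S a c → ∀ (hc : c ∈ S), (G.induce S).Reachable ⟨a, ha⟩ ⟨c, hc⟩ := by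
      intro c h
      induction h with
      | refl => intro hc; rfl
      | tail _ hlast ih =>
        intro hc
        exact (ih hlast.1).trans (SimpleGraph.Adj.reachable (by exact hlast.2.2))
    exact this b h hb

/-- inclusion hom between induced subgraphs -/
def inclHom {G G' : SimpleGraph V} (hG : G ≤ G') {S S' : Set V} (hS : S ⊆ S') :
    G.induce S →g G'.induce S' := ⟨fun z => ⟨z.1, hS z.2⟩, fun h => hG h⟩

theorem mk_eq_mk_iff_chain {G : SimpleGraph V} {S : Set V} {a b : V} (ha : a ∈ S) (hb : b ∈ S) :
    (G.induce S).connectedComponentMk ⟨a, ha⟩ = (G.induce S).connectedComponentMk ⟨b, hb⟩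
      ↔ Chain G S a b := by
  rw [ConnectedComponent.eq, reachable_iff_chain]

theorem cComp_le_of_chain_imp {G G' : SimpleGraph V} {S S' : Set V} (hG : G ≤ G') (hS : S ⊆ S')
    (h : ∀ a b, a ∈ S → b ∈ S → Chain G' S' a b → Chain G S a b) :
    cComp G S ≤ cComp G' S' := by
  apply Nat.card_le_card_of_injective (ConnectedComponent.map (inclHom hG hS))
  intro c d
  refine ConnectedComponent.ind (fun p => ConnectedComponent.ind (fun q => ?_) d) c
  intro hcd
  simp only [ConnectedComponent.map_mk] at hcd
  rw [mk_eq_mk_iff_chain] at hcd ⊢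
  exact h _ _ p.2 q.2 hcd

theorem card_lt_of_surj_fiber {α β : Type u} [Finite α] [Finite β] (f : α → β)
    (hs : Surjective f) (a₁ a₂ : α) (h12 : a₁ ≠ a₂) (hf : f a₁ = f a₂) :
    Nat.card β < Nat.card α := by
  classical
  set s := surjInv hs with hsdef
  have hsi : Injective s := injective_surjInv hs
  have hri : ∀ y, f (s y) = y := rightInverse_surjInv hs
  have hmiss : a₁ ∉ Set.range s ∨ a₂ ∉ Set.range s := by
    by_contra hcon
    push_neg at hcon
    obtain ⟨⟨y₁, hy₁⟩, ⟨y₂, hy₂⟩⟩ := hcon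
    have e1 : y₁ = f a₁ := by rw [← hy₁, hri]
    have e2 : y₂ = f a₂ := by rw [← hy₂, hri]
    have : y₁ = y₂ := by rw [e1, e2, hf]
    exact h12 (by rw [← hy₁, ← hy₂, this])
  obtain ⟨a₀, ha₀⟩ : ∃ a₀, a₀ ∉ Set.range s := by
    rcases hmiss with h | h
    exacts [⟨a₁, h⟩, ⟨a₂, h⟩]
  have := Fintype.ofFinite α; have := Fintype.ofFinite β
  simpa [Nat.card_eq_fintype_card] using
    Fintype.card_lt_of_injective_of_notMem s hsi (by simpa using ha₀)


/-- Surgery: bypass a vertex `u` all of whose neighbours chain to `v'` in `S \ {u}`. -/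
theorem chain_del_of_hub {G : SimpleGraph V} {S : Set V} {u v' : V}
    (hall : ∀ w, w ∈ S → w ≠ u → G.Adj u w → Chain G (S \ {u}) v' w)
    {a b : V} (h : Chain G S a b) (ha : a ≠ u) (hb : b ≠ u) :
    Chain G (S \ {u}) a b := by
  have main : ∀ a (h : Chain G S a b),
      (a ≠ u → Chain G (S \ {u}) a b) ∧ (a = u → Chain G (S \ {u}) v' b) := by
    intro a h
    refine Relation.ReflTransGen.head_induction_on h ⟨fun _ => Relation.ReflTransGen.refl,
      fun hbu => absurd hbu hb⟩ ?_
    rintro p c hpc hcb ⟨ih1, ih2⟩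
    constructor
    · intro hpu
      by_cases hcu : c = u
      · have h1 : Chain G (S \ {u}) v' p :=
          hall p hpc.1 hpu (by rw [← hcu]; exact hpc.2.2.symm)
        exact Relation.ReflTransGen.trans h1.symm (ih2 hcu)
      · exact Relation.ReflTransGen.head ⟨⟨hpc.1, hpu⟩, ⟨hpc.2.1, hcu⟩, hpc.2.2⟩ (ih1 hcu)
    · intro hpu
      have hcu : c ≠ u := fun h => hpc.2.2.ne (by rw [hpu, h])
      refine Relation.ReflTransGen.trans (hall c hpc.2.1 hcu ?_) (ih1 hcu)
      rw [← hpu]; exact hpc.2.2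
  exact (main a h).1 ha

/-- If `u` is a cut vertex of `G[B]`, then for any reference vertex `v'` there is a
neighbour of `u` in `B \ {u}` not chain-connected to `v'` there. -/
theorem cv_exists {G : SimpleGraph V} {B : Set V} {u : V} (hcv : CutVertexOn G B u) (v' : V) :
    ∃ w, w ∈ B ∧ w ≠ u ∧ G.Adj u w ∧ ¬ Chain G (B \ {u}) v' w := by
  by_contra hcon
  push_neg at hcon
  have hle : cComp G (B \ {u}) ≤ cComp G B := by
    refine cComp_le_of_chain_imp le_rfl Set.diff_subset ?_
    intro a b haS hbS hch
    exact chain_del_of_hub (fun w hw hwu hadj => hcon w hw hwu hadj) hch haS.2 hbS.2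
  exact absurd hcv.2 (not_lt.mpr hle)

/-- Surgery past a free vertex. -/
theorem chain_del_free {G : SimpleGraph V} {S : Set V} {v : V}
    (hfr : ∀ a b, a ∈ S → b ∈ S → G.Adj v a → G.Adj v b → a ≠ b → G.Adj a b)
    {a b : V} (h : Chain G S a b) (ha : a ≠ v) (hb : b ≠ v) :
    Chain G (S \ {v}) a b := by
  have main : ∀ a (h : Chain G S a b),
      (a ≠ v → Chain G (S \ {v}) a b) ∧
      (a = v → b = v ∨ ∃ d, d ∈ S ∧ d ≠ v ∧ G.Adj v d ∧ Chain G (S \ {v}) d b) := by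
    intro a h
    refine Relation.ReflTransGen.head_induction_on h
      ⟨fun _ => Relation.ReflTransGen.refl, fun hbv => Or.inl hbv⟩ ?_
    rintro p c hpc hcb ⟨ih1, ih2⟩
    constructor
    · intro hpv
      by_cases hcv : c = v
      · have hvp : G.Adj v p := by rw [← hcv]; exact hpc.2.2.symm
        rcases ih2 hcv with hbv | ⟨d, hdS, hdv, hvd, hch⟩
        · exact absurd hbv hb
        · by_cases hpd : p = d
          · exact hpd ▸ hch
          · have hadj : G.Adj p d := hfr p d hpc.1 hdS hvp hvd hpd
            exact Relation.ReflTransGen.head ⟨⟨hpc.1, hpv⟩, ⟨hdS, hdv⟩, hadj⟩ hch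
      · exact Relation.ReflTransGen.head ⟨⟨hpc.1, hpv⟩, ⟨hpc.2.1, hcv⟩, hpc.2.2⟩ (ih1 hcv)
    · intro hpv
      have hcv : c ≠ v := fun h => hpc.2.2.ne (by rw [hpv, h])
      refine Or.inr ⟨c, hpc.2.1, hcv, ?_, ih1 hcv⟩
      rw [← hpv]; exact hpc.2.2
  exact (main a h).1 ha

theorem cComp_del_free_le {G : SimpleGraph V} {S : Set V} {v : V}
    (hfr : ∀ a b, a ∈ S → b ∈ S → G.Adj v a → G.Adj v b → a ≠ b → G.Adj a b) :
    cComp G (S \ {v}) ≤ cComp G S := by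
  refine cComp_le_of_chain_imp le_rfl Set.diff_subset ?_
  intro a b haS hbS hch
  exact chain_del_free hfr hch haS.2 hbS.2

/-- Removing a free vertex that has a neighbour in `S` keeps the number of components. -/
theorem cComp_del_free_eq {G : SimpleGraph V} {S : Set V} {v : V}
    (hfr : ∀ a b, a ∈ S → b ∈ S → G.Adj v a → G.Adj v b → a ≠ b → G.Adj a b)
    (hv : v ∈ S) {y : V} (hy : y ∈ S) (hyv : G.Adj v y) :
    cComp G (S \ {v}) = cComp G S := by
  have hyne : y ≠ v := hyv.ne'
  apply Nat.card_eq_of_bijective (ConnectedComponent.map (inclHom le_rfl (Set.diff_subset)))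
  constructor
  · intro c d
    refine ConnectedComponent.ind (fun p => ConnectedComponent.ind (fun q => ?_) d) c
    intro hcd
    simp only [ConnectedComponent.map_mk] at hcd
    rw [mk_eq_mk_iff_chain] at hcd ⊢
    exact chain_del_free hfr hcd p.2.2 q.2.2
  · refine ConnectedComponent.ind (fun z => ?_)
    by_cases hzv : z.1 = v
    · refine ⟨(G.induce (S \ {v})).connectedComponentMk ⟨y, ⟨hy, hyne⟩⟩, ?_⟩
      simp only [ConnectedComponent.map_mk]
      rw [show (inclHom (le_refl G) (Set.diff_subset)) (⟨y, ⟨hy, hyne⟩⟩ : ↥(S \ {v})) = ⟨y, hy⟩ from rfl]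
      rw [show z = ⟨v, hv⟩ from Subtype.ext hzv]
      rw [mk_eq_mk_iff_chain]
      exact Relation.ReflTransGen.single ⟨hy, hv, hyv.symm⟩
    · refine ⟨(G.induce (S \ {v})).connectedComponentMk ⟨z.1, ⟨z.2, hzv⟩⟩, ?_⟩
      simp only [ConnectedComponent.map_mk]
      congr 1

/-- If `v` is isolated in `S`, a chain starting at `v` goes nowhere. -/
theorem chain_isolated {G : SimpleGraph V} {S : Set V} {v w : V}
    (hiso : ∀ z, z ∈ S → ¬ G.Adj v z) (h : Chain G S v w) : v = w := by
  rcases Relation.ReflTransGen.cases_head h with h | ⟨c, hvc, _⟩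
  · exact h
  · exact absurd hvc.2.2 (hiso c hvc.2.1)

/-- Key counting lemma: adding a vertex `u` adjacent to two different components
strictly decreases the component count. -/
theorem cComp_union_lt {G : SimpleGraph V} {S : Set V} {u v w : V} (hu : u ∉ S)
    (hv : v ∈ S) (hw : w ∈ S) (hadjv : G.Adj u v) (hadjw : G.Adj u w)
    (hnch : ¬ Chain G S v w) :
    cComp G (S ∪ {u}) < cComp G S := by
  have hsub : S ⊆ S ∪ {u} := Set.subset_union_left
  set f := ConnectedComponent.map (inclHom (le_refl G) hsub) with hf
  have hsurj : Surjective f := by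
    refine ConnectedComponent.ind (fun z => ?_)
    rcases z with ⟨z, hz | hz⟩
    · exact ⟨(G.induce S).connectedComponentMk ⟨z, hz⟩, by simp only [hf, ConnectedComponent.map_mk]; rfl⟩
    · simp only [Set.mem_singleton_iff] at hz
      subst hz
      refine ⟨(G.induce S).connectedComponentMk ⟨v, hv⟩, ?_⟩
      simp only [hf, ConnectedComponent.map_mk]
      rw [show (inclHom (le_refl G) hsub) (⟨v, hv⟩ : ↥S) = ⟨v, hsub hv⟩ from rfl]
      exact (mk_eq_mk_iff_chain (hsub hv) (Or.inr rfl)).mpr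
        (Relation.ReflTransGen.single ⟨hsub hv, Or.inr rfl, hadjv.symm⟩)
  have hfib : f ((G.induce S).connectedComponentMk ⟨v, hv⟩)
      = f ((G.induce S).connectedComponentMk ⟨w, hw⟩) := by
    simp only [hf, ConnectedComponent.map_mk]
    rw [show (inclHom (le_refl G) hsub) (⟨v, hv⟩ : ↥S) = ⟨v, hsub hv⟩ from rfl,
      show (inclHom (le_refl G) hsub) (⟨w, hw⟩ : ↥S) = ⟨w, hsub hw⟩ from rfl]
    rw [mk_eq_mk_iff_chain]
    exact Relation.ReflTransGen.head ⟨hsub hv, Or.inr rfl, hadjv.symm⟩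
      (Relation.ReflTransGen.single ⟨Or.inr rfl, hsub hw, hadjw⟩)
  have hne : (G.induce S).connectedComponentMk ⟨v, hv⟩
      ≠ (G.induce S).connectedComponentMk ⟨w, hw⟩ := by
    rw [Ne, mk_eq_mk_iff_chain]
    exact hnch
  exact card_lt_of_surj_fiber f hsurj _ _ hne hfib


theorem erase_diff (B : Set V) (T : Finset V) {t : V} (ht : t ∈ T) :
    (B \ ↑(T.erase t)) \ {t} = B \ ↑T := by
  ext z
  simp only [Set.mem_diff, Finset.coe_erase, Set.mem_diff, Set.mem_singleton_iff,
    Finset.mem_coe]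
  constructor
  · rintro ⟨⟨hzB, hz⟩, hzt⟩
    exact ⟨hzB, fun hzT => hz ⟨hzT, hzt⟩⟩
  · rintro ⟨hzB, hzT⟩
    have hzt : z ≠ t := fun h => hzT (h ▸ ht)
    exact ⟨⟨hzB, fun h => hzT h.1⟩, hzt⟩

theorem not_cutVertex_free {G : SimpleGraph V} {S : Set V} {v : V}
    (hfr : ∀ a b, a ∈ S → b ∈ S → G.Adj v a → G.Adj v b → a ≠ b → G.Adj a b) :
    ¬ CutVertexOn G S v :=
  fun hcv => absurd hcv.2 (not_lt.mpr (cComp_del_free_le hfr))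

/-- Core lemma: if every neighbour of `v` (in `A`) has a neighbour outside
`N[v]`, then `N(v) ∩ A` is a cutset of `G[A]`. -/
theorem cutset_of_nbhd (G : SimpleGraph V) (A : Set V) (v : V) (hv : v ∈ A)
    (hw : ∀ u, G.Adj v u → u ∈ A → ∃ w, w ∈ A ∧ ¬ G.Adj v w ∧ w ≠ v ∧ G.Adj u w) :
    ∃ T : Finset V, CutsetOn G A T ∧ (G.neighborSet v ∩ A : Set V) ⊆ ↑T := by
  have hfin : (G.neighborSet v ∩ A : Set V).Finite := Set.toFinite _
  refine ⟨hfin.toFinset, ⟨?_, ?_⟩, by rw [hfin.coe_toFinset]⟩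
  · rw [hfin.coe_toFinset]; exact Set.inter_subset_right
  · intro u huT
    rw [Set.Finite.mem_toFinset] at huT
    obtain ⟨hadj, huA⟩ := huT
    have hadj : G.Adj v u := hadj
    obtain ⟨w, hwA, hwnadj, hwv, huw⟩ := hw u hadj huA
    set S : Set V := A \ ↑hfin.toFinset with hSdef
    have hmemS : ∀ z, z ∈ S ↔ z ∈ A ∧ ¬ G.Adj v z := by
      intro z
      simp only [hSdef, Set.mem_diff, Finset.mem_coe, Set.Finite.mem_toFinset,
        Set.mem_inter_iff, mem_neighborSet]
      tauto
    have hvS : v ∈ S := (hmemS v).mpr ⟨hv, G.irrefl⟩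
    have hwS : w ∈ S := (hmemS w).mpr ⟨hwA, hwnadj⟩
    have huS : u ∉ S := fun h => ((hmemS u).mp h).2 hadj
    have hE : A \ ↑(hfin.toFinset.erase u) = S ∪ {u} := by
      ext z
      simp only [Set.mem_diff, Finset.coe_erase, Set.mem_diff, Set.mem_singleton_iff,
        Finset.mem_coe, Set.mem_union, hmemS z, Set.Finite.mem_toFinset, Set.mem_inter_iff,
        mem_neighborSet]
      constructor
      · rintro ⟨hzA, hz⟩
        by_cases hzu : z = u
        · exact Or.inr hzu
        · exact Or.inl ⟨hzA, fun hvz => hz ⟨⟨hvz, hzA⟩, hzu⟩⟩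
      · rintro (⟨hzA, hz⟩ | rfl)
        · exact ⟨hzA, fun h => hz h.1.1⟩
        · exact ⟨huA, fun h => h.2 rfl⟩
    have hE2 : (S ∪ {u}) \ {u} = S := by
      ext z
      simp only [Set.mem_diff, Set.mem_union, Set.mem_singleton_iff]
      constructor
      · rintro ⟨hz | rfl, hzu⟩
        · exact hz
        · exact absurd rfl hzu
      · intro hz
        exact ⟨Or.inl hz, fun h => huS (h ▸ hz)⟩
    refine ⟨⟨huA, ?_⟩, ?_⟩
    · intro hmem
      rw [Finset.coe_erase] at hmem
      exact hmem.2 rfl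
    · rw [hE, hE2]
      have hnch : ¬ Chain G S v w := by
        intro hch
        have hiso : ∀ z, z ∈ S → ¬ G.Adj v z := fun z hz => ((hmemS z).mp hz).2
        exact hwv (chain_isolated hiso hch).symm
      exact cComp_union_lt huS hvS hwS hadj.symm huw hnch

/-- Uniform contradiction lemma used for all three cutset transfers. -/
theorem noCutset_contra (G : SimpleGraph V) (A : Set V) (v x : V)
    (hv : v ∈ A) (hvx : v ≠ x) (hx : CutVertexOn G A x)
    (hnT : ¬ ∃ T : Finset V, CutsetOn G A T ∧ (G.neighborSet v ∩ A : Set V) ⊆ ↑T)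
    (H : SimpleGraph V) (B : Set V) (hGH : G ≤ H) (hBA : B ⊆ A)
    (hBx : ∀ z, z ∈ A → z ≠ x → z ∈ B)
    (hKey : ∀ u w, H.Adj u w → ¬ H.Adj v w → w ≠ v →
      G.Adj u w ∨ (¬ G.Adj v x ∧ G.Adj u x ∧ x ∈ A))
    (T : Finset V) (hT : CutsetOn H B T)
    (hsub : (H.neighborSet v ∩ B : Set V) ⊆ ↑T) : False := by
  apply hnT
  apply cutset_of_nbhd G A v hv
  intro u hadjvu huA
  by_cases hux : u = x
  · obtain ⟨w, hwA, hwx, hxw, hnch⟩ := cv_exists hx v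
    refine ⟨w, hwA, ?_, ?_, by rw [hux]; exact hxw⟩
    · intro hvw
      exact hnch (Relation.ReflTransGen.single ⟨⟨hv, hvx⟩, ⟨hwA, hwx⟩, hvw⟩)
    · intro hwv
      exact hnch (hwv ▸ Relation.ReflTransGen.refl)
  · have huB : u ∈ B := hBx u huA hux
    have huT : u ∈ T := by
      refine Finset.mem_coe.mp (hsub ⟨?_, huB⟩)
      exact hGH hadjvu
    obtain ⟨w, hwmem, hwu, hadjuw, hnch⟩ := cv_exists (hT.2 u huT) v
    have hwB : w ∈ B := hwmem.1
    have hwT : w ∉ T := by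
      intro hwT
      rw [Set.mem_diff, Finset.coe_erase] at hwmem
      exact hwmem.2 ⟨hwT, hwu⟩
    have hwv : w ≠ v := fun h => hnch (h ▸ Relation.ReflTransGen.refl)
    have hnHvw : ¬ H.Adj v w := fun hh => hwT (Finset.mem_coe.mp (hsub ⟨hh, hwB⟩))
    rcases hKey u w hadjuw hnHvw hwv with hGuw | ⟨hnvx, hux2, hxA⟩
    · exact ⟨w, hBA hwB, fun hvw => hnHvw (hGH hvw), hwv, hGuw⟩
    · exact ⟨x, hxA, hnvx, Ne.symm hvx, hux2⟩

theorem hKey_clique {G : SimpleGraph V} {A : Set V} {v x : V} (hv : v ∈ A) (hxA : x ∈ A) :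
    ∀ u w, (cliqueAtOn G A x).Adj u w → ¬ (cliqueAtOn G A x).Adj v w → w ≠ v →
      G.Adj u w ∨ (¬ G.Adj v x ∧ G.Adj u x ∧ x ∈ A) := by
  intro u w huw hnvw hwv
  rw [cliqueAtOn, sup_adj, fromRel_adj] at huw
  rcases huw with h | ⟨hne, hrel⟩
  · exact Or.inl h
  · obtain ⟨huA, hwA, hxu, hxw⟩ : u ∈ A ∧ w ∈ A ∧ G.Adj x u ∧ G.Adj x w := by
      rcases hrel with ⟨h1, h2, h3, h4⟩ | ⟨h1, h2, h3, h4⟩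
      exacts [⟨h1, h2, h3, h4⟩, ⟨h2, h1, h4, h3⟩]
    by_cases hvxadj : G.Adj v x
    · exfalso
      apply hnvw
      rw [cliqueAtOn, sup_adj, fromRel_adj]
      exact Or.inr ⟨Ne.symm hwv, Or.inl ⟨hv, hwA, hvxadj.symm, hxw⟩⟩
    · exact Or.inr ⟨hvxadj, hxu.symm, hxA⟩

theorem induce_eq {G G' : SimpleGraph V} {A : Set V}
    (h : ∀ a b, a ∈ A → b ∈ A → (G.Adj a b ↔ G'.Adj a b)) : G.induce A = G'.induce A := by
  ext a b
  exact h a.1 b.1 a.2 b.2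

theorem cComp_congr {G G' : SimpleGraph V} {A S : Set V} (hsub : S ⊆ A)
    (h : ∀ a b, a ∈ A → b ∈ A → (G.Adj a b ↔ G'.Adj a b)) : cComp G S = cComp G' S := by
  unfold cComp
  rw [induce_eq (fun a b ha hb => h a b (hsub ha) (hsub hb))]

theorem cutVertexOn_congr {G G' : SimpleGraph V} {A S : Set V} (hsub : S ⊆ A)
    (h : ∀ a b, a ∈ A → b ∈ A → (G.Adj a b ↔ G'.Adj a b)) {y : V} :
    CutVertexOn G S y ↔ CutVertexOn G' S y := by
  unfold CutVertexOn
  rw [cComp_congr hsub h, cComp_congr (Set.diff_subset.trans hsub) h]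

theorem cutsetOn_congr {G G' : SimpleGraph V} {A S : Set V} (hsub : S ⊆ A)
    (h : ∀ a b, a ∈ A → b ∈ A → (G.Adj a b ↔ G'.Adj a b)) {T : Finset V} :
    CutsetOn G S T ↔ CutsetOn G' S T := by
  unfold CutsetOn
  refine and_congr Iff.rfl (forall_congr' fun t => forall_congr' fun ht => ?_)
  exact cutVertexOn_congr (Set.diff_subset.trans hsub) h

theorem unmixedOn_congr {G G' : SimpleGraph V} {A S : Set V} (hsub : S ⊆ A)
    (h : ∀ a b, a ∈ A → b ∈ A → (G.Adj a b ↔ G'.Adj a b)) :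
    UnmixedOn G S ↔ UnmixedOn G' S := by
  unfold UnmixedOn
  refine forall_congr' fun T => ?_
  rw [cutsetOn_congr hsub h, cComp_congr (Set.diff_subset.trans hsub) h, cComp_congr hsub h]

theorem cliqueAt_congr {G G' : SimpleGraph V} {A : Set V} {x : V}
    (h : ∀ a b, a ∈ A → b ∈ A → (G.Adj a b ↔ G'.Adj a b)) (hxA : x ∈ A) :
    ∀ a b, a ∈ A → b ∈ A → ((cliqueAtOn G A x).Adj a b ↔ (cliqueAtOn G' A x).Adj a b) := by
  intro a b ha hb
  simp only [cliqueAtOn, sup_adj, fromRel_adj]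
  constructor
  · rintro (hG | ⟨hne, ⟨h1, h2, h3, h4⟩ | ⟨h1, h2, h3, h4⟩⟩)
    · exact Or.inl ((h a b ha hb).mp hG)
    · exact Or.inr ⟨hne, Or.inl ⟨h1, h2, (h x a hxA h1).mp h3, (h x b hxA h2).mp h4⟩⟩
    · exact Or.inr ⟨hne, Or.inr ⟨h1, h2, (h x b hxA h1).mp h3, (h x a hxA h2).mp h4⟩⟩
  · rintro (hG | ⟨hne, ⟨h1, h2, h3, h4⟩ | ⟨h1, h2, h3, h4⟩⟩)
    · exact Or.inl ((h a b ha hb).mpr hG)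
    · exact Or.inr ⟨hne, Or.inl ⟨h1, h2, (h x a hxA h1).mpr h3, (h x b hxA h2).mpr h4⟩⟩
    · exact Or.inr ⟨hne, Or.inr ⟨h1, h2, (h x b hxA h1).mpr h3, (h x a hxA h2).mpr h4⟩⟩

theorem cliqueAt_shrink {G : SimpleGraph V} {A : Set V} {v x : V} :
    ∀ a b, a ∈ A \ {v} → b ∈ A \ {v} →
      ((cliqueAtOn G A x).Adj a b ↔ (cliqueAtOn G (A \ {v}) x).Adj a b) := by
  intro a b ha hb
  simp only [cliqueAtOn, sup_adj, fromRel_adj]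
  constructor
  · rintro (hG | ⟨hne, ⟨h1, h2, h3, h4⟩ | ⟨h1, h2, h3, h4⟩⟩)
    · exact Or.inl hG
    · exact Or.inr ⟨hne, Or.inl ⟨ha, hb, h3, h4⟩⟩
    · exact Or.inr ⟨hne, Or.inr ⟨hb, ha, h3, h4⟩⟩
  · rintro (hG | ⟨hne, ⟨h1, h2, h3, h4⟩ | ⟨h1, h2, h3, h4⟩⟩)
    · exact Or.inl hG
    · exact Or.inr ⟨hne, Or.inl ⟨h1.1, h2.1, h3, h4⟩⟩
    · exact Or.inr ⟨hne, Or.inr ⟨h1.1, h2.1, h3, h4⟩⟩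

theorem su_congr {G : SimpleGraph V} {A : Set V} (h : StronglyUnmixedOn G A) :
    ∀ G' : SimpleGraph V, (∀ a b, a ∈ A → b ∈ A → (G.Adj a b ↔ G'.Adj a b)) →
    StronglyUnmixedOn G' A := by
  induction h with
  | complete G A hc =>
    intro G' he
    refine StronglyUnmixedOn.complete _ _ ?_
    rw [← induce_eq he]
    exact hc
  | cut G A hU x hx h1 h2 h3 ih1 ih2 ih3 =>
    intro G' he
    refine StronglyUnmixedOn.cut G' A ((unmixedOn_congr subset_rfl he).mp hU) x
      ((cutVertexOn_congr subset_rfl he).mp hx)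
      (ih1 G' (fun a b ha hb => he a b ha.1 hb.1))
      (ih2 (cliqueAtOn G' A x) (cliqueAt_congr he hx.1))
      (ih3 (cliqueAtOn G' A x) (fun a b ha hb => cliqueAt_congr he hx.1 a b ha.1 hb.1))

theorem freeH {G : SimpleGraph V} {A : Set V} {v x : V}
    (hfr : ∀ a b, a ∈ A → b ∈ A → G.Adj v a → G.Adj v b → a ≠ b → G.Adj a b)
    (hv : v ∈ A) (hxA : x ∈ A) :
    ∀ a b, a ∈ A → b ∈ A → (cliqueAtOn G A x).Adj v a → (cliqueAtOn G A x).Adj v b →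
      a ≠ b → (cliqueAtOn G A x).Adj a b := by
  intro a b haA hbA hva hvb hab
  have decomp : ∀ {c : V}, (cliqueAtOn G A x).Adj v c → G.Adj v c ∨ (G.Adj x v ∧ G.Adj x c) := by
    intro c h
    rw [cliqueAtOn, sup_adj, fromRel_adj] at h
    rcases h with h | ⟨_, ⟨_, _, h3, h4⟩ | ⟨_, _, h3, h4⟩⟩
    exacts [Or.inl h, Or.inr ⟨h3, h4⟩, Or.inr ⟨h4, h3⟩]
  have mk : ∀ {c d : V}, c ∈ A → d ∈ A → c ≠ d → G.Adj x c → G.Adj x d →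
      (cliqueAtOn G A x).Adj c d := by
    intro c d hc hd hne hh1 hh2
    rw [cliqueAtOn, sup_adj, fromRel_adj]
    exact Or.inr ⟨hne, Or.inl ⟨hc, hd, hh1, hh2⟩⟩
  have lift : ∀ {c d : V}, G.Adj c d → (cliqueAtOn G A x).Adj c d := by
    intro c d h
    rw [cliqueAtOn, sup_adj]
    exact Or.inl h
  rcases decomp hva with ha1 | ⟨hxv, hxa⟩
  · rcases decomp hvb with hb1 | ⟨hxv', hxb⟩
    · exact lift (hfr a b haA hbA ha1 hb1 hab)
    · by_cases hax : a = x
      · exact lift (by rw [hax]; exact hxb)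
      · exact mk haA hbA hab (hfr a x haA hxA ha1 hxv'.symm hax).symm hxb
  · rcases decomp hvb with hb1 | ⟨hxv', hxb⟩
    · by_cases hbx : b = x
      · exact lift (by rw [hbx]; exact hxa.symm)
      · exact mk haA hbA hab hxa (hfr b x hbA hxA hb1 hxv.symm hbx).symm
    · exact mk haA hbA hab hxa hxb

theorem singleton_cutset {G : SimpleGraph V} {A : Set V} {x : V} (hx : CutVertexOn G A x) :
    CutsetOn G A ({x} : Finset V) := by
  constructor
  · intro z hz
    rw [Finset.coe_singleton, Set.mem_singleton_iff] at hz
    exact hz ▸ hx.1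
  · intro t ht
    rw [Finset.mem_singleton] at ht
    subst ht
    rw [Finset.erase_singleton]
    simpa using hx

theorem unmixed_del_free {G : SimpleGraph V} {A : Set V} {v : V} (hU : UnmixedOn G A)
    (hv : v ∈ A)
    (hfr : ∀ a b, a ∈ A → b ∈ A → G.Adj v a → G.Adj v b → a ≠ b → G.Adj a b)
    (hnT : ¬ ∃ T : Finset V, CutsetOn G A T ∧ (G.neighborSet v ∩ A : Set V) ⊆ ↑T) :
    UnmixedOn G (A \ {v}) := by
  intro T hT
  have hvT : v ∉ T := fun h => (hT.1 h).2 rfl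
  by_cases hNsub : (G.neighborSet v ∩ A : Set V) ⊆ ↑T
  · exfalso
    apply hnT
    apply cutset_of_nbhd G A v hv
    intro u hadj huA
    have huT : u ∈ T := Finset.mem_coe.mp (hNsub ⟨hadj, huA⟩)
    obtain ⟨w, hwmem, hwu, huw, hnch⟩ := cv_exists (hT.2 u huT) v
    have hwA : w ∈ A := hwmem.1.1
    have hwT : w ∉ T := by
      intro hwT
      rw [Set.mem_diff, Finset.coe_erase] at hwmem
      exact hwmem.2 ⟨hwT, hwu⟩
    refine ⟨w, hwA, ?_, ?_, huw⟩
    · intro hvw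
      exact hwT (Finset.mem_coe.mp (hNsub ⟨hvw, hwA⟩))
    · exact hwmem.1.2
  · have hy : ∃ y, G.Adj v y ∧ y ∈ A ∧ y ∉ T := by
      by_contra hcon
      push_neg at hcon
      exact hNsub (fun z hz => Finset.mem_coe.mpr (hcon z hz.1 hz.2))
    obtain ⟨y, hyadj, hyA, hyT⟩ := hy
    have hyv : y ≠ v := hyadj.ne'
    have hTA : CutsetOn G A T := by
      refine ⟨(hT.1).trans Set.diff_subset, fun t ht => ?_⟩
      have hvET : v ∉ (↑(T.erase t) : Set V) := fun h => hvT (Finset.mem_of_mem_erase h)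
      have hyET : y ∉ (↑(T.erase t) : Set V) := fun h => hyT (Finset.mem_of_mem_erase h)
      have h1 : cComp G ((A \ ↑(T.erase t)) \ {v}) = cComp G (A \ ↑(T.erase t)) :=
        cComp_del_free_eq (fun a b ha hb => hfr a b ha.1 hb.1) ⟨hv, hvET⟩ ⟨hyA, hyET⟩ hyadj
      have h2 : (A \ ↑(T.erase t)) \ {v} = (A \ {v}) \ ↑(T.erase t) := Set.diff_diff_comm
      have h3 := (hT.2 t ht).2
      have h4 : ((A \ {v}) \ ↑(T.erase t)) \ {t} = (A \ {v}) \ ↑T := erase_diff _ _ ht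
      have h5 : (A \ {v}) \ ↑T = (A \ ↑T) \ {v} := Set.diff_diff_comm
      have h6 : cComp G ((A \ ↑T) \ {v}) ≤ cComp G (A \ ↑T) :=
        cComp_del_free_le (fun a b ha hb => hfr a b ha.1 hb.1)
      have h7 : (A \ ↑(T.erase t)) \ {t} = A \ ↑T := erase_diff _ _ ht
      have htA : t ∈ A := (hT.1 ht).1
      have htET : t ∉ (↑(T.erase t) : Set V) := by
        simp
      refine ⟨⟨htA, htET⟩, ?_⟩
      rw [h7]
      calc cComp G (A \ ↑(T.erase t)) = cComp G ((A \ {v}) \ ↑(T.erase t)) := by rw [← h2, h1]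
        _ < cComp G (((A \ {v}) \ ↑(T.erase t)) \ {t}) := h3
        _ = cComp G ((A \ ↑T) \ {v}) := by rw [h4, h5]
        _ ≤ cComp G (A \ ↑T) := h6
    have e0 := hU T hTA
    have hvTset : v ∉ (↑T : Set V) := hvT
    have hyTset : y ∉ (↑T : Set V) := hyT
    have e1 : cComp G ((A \ {v}) \ ↑T) = cComp G (A \ ↑T) := by
      rw [show (A \ {v}) \ ↑T = (A \ ↑T) \ {v} from Set.diff_diff_comm]
      exact cComp_del_free_eq (fun a b ha hb => hfr a b ha.1 hb.1) ⟨hv, hvTset⟩ ⟨hyA, hyTset⟩ hyadj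
    have e2 : cComp G (A \ {v}) = cComp G A :=
      cComp_del_free_eq hfr hv hyA hyadj
    rw [e1, e0, e2]

theorem main_su {G : SimpleGraph V} {A : Set V} (h : StronglyUnmixedOn G A) :
    ∀ v, v ∈ A → (∀ a b, a ∈ A → b ∈ A → G.Adj v a → G.Adj v b → a ≠ b → G.Adj a b) →
    (¬ ∃ T : Finset V, CutsetOn G A T ∧ (G.neighborSet v ∩ A : Set V) ⊆ ↑T) →
    StronglyUnmixedOn G (A \ {v}) := by
  induction h with
  | complete G A hc =>
    intro v hv hfr hnT
    refine StronglyUnmixedOn.complete _ _ ?_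
    rintro ⟨a, ha⟩ ⟨b, hb⟩ hreach hne
    have hch : Chain G (A \ {v}) a b := (reachable_iff_chain ha hb).mp hreach
    have hchA : Chain G A a b := chain_mono le_rfl Set.diff_subset hch
    have hne' : (⟨a, ha.1⟩ : ↥A) ≠ ⟨b, hb.1⟩ := by
      intro hcon
      have hab : a = b := congrArg Subtype.val hcon
      exact hne (Subtype.ext hab)
    exact hc ⟨a, ha.1⟩ ⟨b, hb.1⟩ ((reachable_iff_chain ha.1 hb.1).mpr hchA) hne'
  | cut G A hU x hx h1 h2 h3 ih1 ih2 ih3 =>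
    intro v hv hfr hnT
    have hxA : x ∈ A := hx.1
    have hvx : v ≠ x := by
      rintro rfl
      exact absurd hx (not_cutVertex_free hfr)
    have hNx : ∃ y, G.Adj v y ∧ y ∈ A ∧ y ≠ x := by
      by_contra hcon
      push_neg at hcon
      apply hnT
      refine ⟨{x}, singleton_cutset hx, ?_⟩
      rintro z ⟨hz1, hz2⟩
      rw [Finset.coe_singleton, Set.mem_singleton_iff]
      exact hcon z hz1 hz2
    obtain ⟨y, hyadj, hyA, hyx⟩ := hNx
    have eA : cComp G (A \ {v}) = cComp G A := cComp_del_free_eq hfr hv hyA hyadj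
    have eAx : cComp G ((A \ {x}) \ {v}) = cComp G (A \ {x}) :=
      cComp_del_free_eq (fun a b ha hb => hfr a b ha.1 hb.1) ⟨hv, hvx⟩ ⟨hyA, hyx⟩ hyadj
    have hx' : CutVertexOn G (A \ {v}) x := by
      refine ⟨⟨hxA, Ne.symm hvx⟩, ?_⟩
      rw [eA, Set.diff_diff_comm, eAx]
      exact hx.2
    have hU' : UnmixedOn G (A \ {v}) := unmixed_del_free hU hv hfr hnT
    have hfrH : ∀ a b, a ∈ A → b ∈ A → (cliqueAtOn G A x).Adj v a → (cliqueAtOn G A x).Adj v b →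
        a ≠ b → (cliqueAtOn G A x).Adj a b := freeH hfr hv hxA
    have hnT1 : ¬ ∃ T : Finset V, CutsetOn G (A \ {x}) T ∧
        (G.neighborSet v ∩ (A \ {x}) : Set V) ⊆ ↑T := by
      rintro ⟨T, hT, hsub⟩
      exact noCutset_contra G A v x hv hvx hx hnT G (A \ {x}) le_rfl Set.diff_subset
        (fun z hz hzx => ⟨hz, hzx⟩) (fun u w h _ _ => Or.inl h) T hT hsub
    have hnT2 : ¬ ∃ T : Finset V, CutsetOn (cliqueAtOn G A x) A T ∧
        ((cliqueAtOn G A x).neighborSet v ∩ A : Set V) ⊆ ↑T := by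
      rintro ⟨T, hT, hsub⟩
      exact noCutset_contra G A v x hv hvx hx hnT (cliqueAtOn G A x) A le_sup_left subset_rfl
        (fun z hz _ => hz) (hKey_clique hv hxA) T hT hsub
    have hnT3 : ¬ ∃ T : Finset V, CutsetOn (cliqueAtOn G A x) (A \ {x}) T ∧
        ((cliqueAtOn G A x).neighborSet v ∩ (A \ {x}) : Set V) ⊆ ↑T := by
      rintro ⟨T, hT, hsub⟩
      exact noCutset_contra G A v x hv hvx hx hnT (cliqueAtOn G A x) (A \ {x}) le_sup_left
        Set.diff_subset (fun z hz hzx => ⟨hz, hzx⟩) (hKey_clique hv hxA) T hT hsub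
    have s1 : StronglyUnmixedOn G ((A \ {x}) \ {v}) :=
      ih1 v ⟨hv, hvx⟩ (fun a b ha hb => hfr a b ha.1 hb.1) hnT1
    have s2 : StronglyUnmixedOn (cliqueAtOn G A x) (A \ {v}) := ih2 v hv hfrH hnT2
    have s3 : StronglyUnmixedOn (cliqueAtOn G A x) ((A \ {x}) \ {v}) :=
      ih3 v ⟨hv, hvx⟩ (fun a b ha hb => hfrH a b ha.1 hb.1) hnT3
    refine StronglyUnmixedOn.cut G (A \ {v}) hU' x hx' ?_ ?_ ?_
    · rw [Set.diff_diff_comm]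
      exact s1
    · exact su_congr s2 _ cliqueAt_shrink
    · rw [Set.diff_diff_comm]
      refine su_congr s3 _ ?_
      intro a b ha hb
      exact cliqueAt_shrink a b ⟨ha.1.1, ha.2⟩ ⟨hb.1.1, hb.2⟩

end Aux

/-- if `v` is a free vertex of `G`, `J_G` is strongly unmixed and no
cutset of `G` contains `N_G(v)`, then `J_{G∖{v}}` is strongly unmixed. -/
theorem stronglyUnmixed_delete_free_vertex {V : Type u} [Fintype V] [DecidableEq V]
    (G : SimpleGraph V) (v : V) (hfree : FreeVertex G v)
    (hsu : StronglyUnmixedOn G Set.univ)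
    (hnT : ¬ ∃ T : Finset V, CutsetOn G Set.univ T ∧ G.neighborSet v ⊆ ↑T) :
    StronglyUnmixedOn G ({v}ᶜ : Set V) := by
  rw [Set.compl_eq_univ_diff]
  refine Aux.main_su hsu v (Set.mem_univ v) (fun a b _ _ hva hvb hne => hfree a b hva hvb hne) ?_
  intro hcon
  obtain ⟨T, hT, hsub⟩ := hcon
  exact hnT ⟨T, hT, by simpa using hsub⟩
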